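/- Let J be a probability space with measure μ and let f, g : ℝ × ℝ → ℝ be Lipschitz continuous with respect to the ℓ¹-norm with constants K_f and K_g respectively. Let W : J × J → [0,1] be measurable. Then the operator F on L¹(J) defined by F(u)(x) = f(u(x), ∫ W(x,y) g(u(x), u(y)) dμ(y)) is Lipschitz continuous with constant K_f + 2 K_f K_g with respect to the L¹ norm. -/

import Mathlib

open MeasureTheory

/-- The right hand side of the graphon dynamical system is Lipschitz
continuous on `L¹` with constant `K_f + 2 K_f K_g`. -/
theorem graphon_vector_field_lipschitz {Ω : Type*} [MeasurableSpace Ω]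
    (μ : Measure Ω) [IsProbabilityMeasure μ]
    (f g : ℝ → ℝ → ℝ) (Kf Kg : ℝ)
    (hf : ∀ x₁ y₁ x₂ y₂ : ℝ, |f x₁ y₁ - f x₂ y₂| ≤ Kf * (|x₁ - x₂| + |y₁ - y₂|))
    (hg : ∀ x₁ y₁ x₂ y₂ : ℝ, |g x₁ y₁ - g x₂ y₂| ≤ Kg * (|x₁ - x₂| + |y₁ - y₂|))
    (W : Ω → Ω → ℝ)
    (hWmeas : Measurable (fun p : Ω × Ω => W p.1 p.2))
    (hWsymm : ∀ x y, W x y = W y x)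
    (hW01 : ∀ x y, W x y ∈ Set.Icc (0 : ℝ) 1)
    (u v : Ω → ℝ) (hu : Integrable u μ) (hv : Integrable v μ)
    (hFu : Integrable (fun x => f (u x) (∫ y, W x y * g (u x) (u y) ∂μ)) μ)
    (hFv : Integrable (fun x => f (v x) (∫ y, W x y * g (v x) (v y) ∂μ)) μ) :
    ∫ x, |f (u x) (∫ y, W x y * g (u x) (u y) ∂μ)
          - f (v x) (∫ y, W x y * g (v x) (v y) ∂μ)| ∂μ
      ≤ (Kf + 2 * Kf * Kg) * ∫ x, |u x - v x| ∂μ := by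
  have hKf0 : 0 ≤ Kf := by
    have h := hf 1 0 0 0
    have h0 := abs_nonneg (f 1 0 - f 0 0)
    simp at h
    linarith
  have hKg0 : 0 ≤ Kg := by
    have h := hg 1 0 0 0
    have h0 := abs_nonneg (g 1 0 - g 0 0)
    simp at h
    linarith
  have hgcont : Continuous (fun p : ℝ × ℝ => g p.1 p.2) := by
    have hl : LipschitzWith (Real.toNNReal (2 * Kg)) (fun p : ℝ × ℝ => g p.1 p.2) := by
      apply LipschitzWith.of_dist_le_mul
      intro p q
      rw [Real.coe_toNNReal _ (by linarith), Prod.dist_eq]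
      have h1 : |p.1 - q.1| ≤ max (dist p.1 q.1) (dist p.2 q.2) := by
        rw [Real.dist_eq, Real.dist_eq]; exact le_max_left _ _
      have h2 : |p.2 - q.2| ≤ max (dist p.1 q.1) (dist p.2 q.2) := by
        rw [Real.dist_eq, Real.dist_eq]; exact le_max_right _ _
      have h := hg p.1 p.2 q.1 q.2
      rw [Real.dist_eq]
      nlinarith
    exact hl.continuous
  set C := ∫ x, |u x - v x| ∂μ with hC
  have huv : Integrable (fun x => |u x - v x|) μ := (hu.sub hv).abs
  -- integrability of inner integrands
  have hint : ∀ (x : Ω) (w : Ω → ℝ), Integrable w μ →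
      Integrable (fun y => W x y * g (w x) (w y)) μ := by
    intro x w hw
    have hWx : Measurable (fun y => W x y) := hWmeas.comp measurable_prodMk_left
    have hgm : AEStronglyMeasurable (fun y => g (w x) (w y)) μ :=
      (hgcont.comp (Continuous.prodMk_right (w x))).comp_aestronglyMeasurable hw.1
    refine Integrable.mono ((integrable_const (|g (w x) 0|)).add (hw.abs.const_mul Kg))
      (hWx.aestronglyMeasurable.mul hgm) (Filter.Eventually.of_forall fun y => ?_)
    have hW := hW01 x y
    have hb : |g (w x) (w y)| ≤ |g (w x) 0| + Kg * |w y| := by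
      have h := hg (w x) (w y) (w x) 0
      simp only [sub_self, abs_zero, zero_add, sub_zero] at h
      have h2 : |g (w x) (w y)| ≤ |g (w x) 0| + |g (w x) (w y) - g (w x) 0| := by
        have := abs_add_le (g (w x) 0) (g (w x) (w y) - g (w x) 0)
        simpa using this
      linarith
    have hWy : |W x y| ≤ 1 := by rw [abs_of_nonneg hW.1]; exact hW.2
    calc ‖W x y * g (w x) (w y)‖ = |W x y| * |g (w x) (w y)| := abs_mul _ _
      _ ≤ 1 * |g (w x) (w y)| := mul_le_mul_of_nonneg_right hWy (abs_nonneg _)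
      _ = |g (w x) (w y)| := one_mul _
      _ ≤ ‖|g (w x) 0| + Kg * |w y|‖ := hb.trans (le_abs_self _)
  have key : ∀ x, |(∫ y, W x y * g (u x) (u y) ∂μ) - (∫ y, W x y * g (v x) (v y) ∂μ)|
      ≤ Kg * |u x - v x| + Kg * C := by
    intro x
    have h1 := hint x u hu
    have h2 := hint x v hv
    rw [← integral_sub h1 h2]
    calc |∫ y, (W x y * g (u x) (u y) - W x y * g (v x) (v y)) ∂μ|
        ≤ ∫ y, |W x y * g (u x) (u y) - W x y * g (v x) (v y)| ∂μ :=
          by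
            simpa [Real.norm_eq_abs] using
              norm_integral_le_integral_norm (fun y => W x y * g (u x) (u y) - W x y * g (v x) (v y))
      _ ≤ ∫ y, (Kg * |u x - v x| + Kg * |u y - v y|) ∂μ := by
          apply integral_mono (h1.sub h2).abs
            ((integrable_const _).add (huv.const_mul Kg))
          intro y
          simp only [Pi.sub_apply, Pi.add_apply]
          rw [← mul_sub, abs_mul]
          have hWy : |W x y| ≤ 1 := by
            rw [abs_of_nonneg (hW01 x y).1]; exact (hW01 x y).2
          calc |W x y| * |g (u x) (u y) - g (v x) (v y)|
              ≤ 1 * (Kg * (|u x - v x| + |u y - v y|)) :=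
                mul_le_mul hWy (hg _ _ _ _) (abs_nonneg _) (by norm_num)
            _ = Kg * |u x - v x| + Kg * |u y - v y| := by ring
      _ = Kg * |u x - v x| + Kg * C := by
          rw [integral_add (integrable_const _) (huv.const_mul Kg),
            integral_const, integral_const_mul]
          simp [hC]
  calc ∫ x, |f (u x) (∫ y, W x y * g (u x) (u y) ∂μ)
          - f (v x) (∫ y, W x y * g (v x) (v y) ∂μ)| ∂μ
      ≤ ∫ x, (Kf * (1 + Kg) * |u x - v x| + Kf * (Kg * C)) ∂μ := by
        apply integral_mono (hFu.sub hFv).abs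
          ((huv.const_mul _).add (integrable_const _))
        intro x
        simp only [Pi.sub_apply, Pi.add_apply]
        have h1 := hf (u x) (∫ y, W x y * g (u x) (u y) ∂μ) (v x)
          (∫ y, W x y * g (v x) (v y) ∂μ)
        have h2 := key x
        nlinarith [abs_nonneg (u x - v x),
          mul_le_mul_of_nonneg_left h2 hKf0]
    _ = (Kf + 2 * Kf * Kg) * C := by
        rw [integral_add (huv.const_mul _) (integrable_const _), integral_const_mul,
          integral_const]
        simp only [probReal_univ, one_smul, smul_eq_mul]
        ring
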